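/- Let k be a difference field and R a k-σ-algebra that is σ-generated by finitely many periodic idempotent elements (i.e. R is generated as a k-algebra by {σⁱ(e_j) : i ∈ ℕ, j} for finitely many idempotents e_j with σ^{n_j}(e_j) = e_j). Then R is strongly σ-étale over k: R is étale as a k-algebra and σ-separable over k. -/

import Mathlib

open TensorProduct

/-- The diagonal endomorphism `σ(a ⊗ b) = σ(a) ⊗ σ(b)` of `A ⊗_k B` is injective
(i.e. `A ⊗_k B` is σ-reduced): any ring endomorphism satisfying the defining rule
on pure tensors is injective. -/
def SigmaReducedTensor (k A B : Type) [CommRing k] [CommRing A] [CommRing B]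
    [Algebra k A] [Algebra k B] (σA : A →+* A) (σB : B →+* B) : Prop :=
  ∀ τ : (A ⊗[k] B) →+* A ⊗[k] B,
    (∀ (a : A) (b : B), τ (a ⊗ₜ[k] b) = σA a ⊗ₜ[k] σB b) → Function.Injective τ

/-- A `k`-σ-algebra `R` is σ-separable over `k` if `R ⊗_k K` is σ-reduced for
every difference field extension `K` of `k`. -/
def IsSigmaSeparable (k R : Type) [Field k] [CommRing R] [Algebra k R]
    (σk : k →+* k) (σR : R →+* R) : Prop :=
  ∀ (K : Type) [Field K] [Algebra k K], ∀ σK : K →+* K,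
    (∀ x : k, σK (algebraMap k K x) = algebraMap k K (σk x)) →
    SigmaReducedTensor k K R σK σR

/-- A `k`-algebra is étale if its base change to the algebraic closure of `k`
is a finite product of copies of the algebraic closure. -/
def IsEtaleAlgebra (k R : Type) [Field k] [CommRing R] [Algebra k R] : Prop :=
  ∃ n : ℕ, Nonempty ((AlgebraicClosure k ⊗[k] R) ≃ₐ[AlgebraicClosure k]
    (Fin n → AlgebraicClosure k))



section PiEquiv
variable {k R K : Type} [CommRing k] [CommRing R] [Algebra k R] [CommRing K] [Algebra k K]
variable {ι : Type} [Fintype ι] [DecidableEq ι]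

noncomputable def piEquivOfIdemBasis (b : Module.Basis ι k R)
    (hmul : ∀ i j, b i * b j = if i = j then b i else 0)
    (hone : ∑ i, b i = 1) :
    (K ⊗[k] R) ≃ₐ[K] (ι → K) := by
  let B := b.baseChange K
  have hB : ∀ i, B i = 1 ⊗ₜ[k] b i := fun i => b.baseChange_apply K i
  have hBmul : ∀ i j, B i * B j = if i = j then B i else 0 := by
    intro i j
    rw [hB, hB, Algebra.TensorProduct.tmul_mul_tmul, one_mul, hmul]
    split <;> simp [hB]
  refine (AlgEquiv.ofLinearEquiv B.equivFun.symm ?_ ?_).symm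
  · rw [Module.Basis.equivFun_symm_apply]
    simp only [Pi.one_apply, one_smul, hB]
    rw [← tmul_sum, hone]
    rfl
  · intro c d
    rw [Module.Basis.equivFun_symm_apply, Module.Basis.equivFun_symm_apply, Module.Basis.equivFun_symm_apply,
      Finset.sum_mul_sum]
    rw [Finset.sum_congr rfl (fun i _ => Finset.sum_congr rfl
      (fun j _ => by rw [smul_mul_smul_comm, hBmul]))]
    simp [Finset.sum_ite_eq, Pi.mul_apply, mul_smul]
end PiEquiv


-- helper: iterate multiple of period fixes
lemma iter_mul_fix {R : Type} (σ : R → R) (e : R) (n : ℕ) (h : σ^[n] e = e) :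
    ∀ q : ℕ, σ^[n * q] e = e := by
  intro q
  induction q with
  | zero => simp
  | succ q ih =>
    rw [Nat.mul_succ, Function.iterate_add_apply, h, ih]

lemma iter_mod_fix {R : Type} (σ : R → R) (e : R) (n : ℕ) (h : σ^[n] e = e) (i : ℕ) :
    σ^[i] e = σ^[i % n] e := by
  conv_lhs => rw [← Nat.mod_add_div i n, Function.iterate_add_apply,
    iter_mul_fix σ e n h (i / n)]


section Main
variable {k R : Type} [Field k] [CommRing R] [Algebra k R]

theorem strongly_etale_aux (σR : R →+* R)
    (s : Finset R)
    (hidem : ∀ e ∈ s, IsIdempotentElem e ∧ ∃ n : ℕ, 0 < n ∧ σR^[n] e = e)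
    (hgen : Algebra.adjoin k {x : R | ∃ e ∈ s, ∃ i : ℕ, σR^[i] e = x} = ⊤) :
    (∃ n : ℕ, Nonempty ((AlgebraicClosure k ⊗[k] R) ≃ₐ[AlgebraicClosure k]
      (Fin n → AlgebraicClosure k))) ∧
    (∀ (K : Type) [Field K] [Algebra k K], ∀ σK : K →+* K,
      ∀ τ : (K ⊗[k] R) →+* K ⊗[k] R,
        (∀ (x : K) (r : R), τ (x ⊗ₜ[k] r) = σK x ⊗ₜ[k] σR r) → Function.Injective τ) := by
  classical
  -- period function
  set f : R → ℕ := fun e => if h : e ∈ s then (hidem e h).2.choose else 1 with hf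
  have hf0 : ∀ e ∈ s, 0 < f e := by
    intro e he; simp only [hf, dif_pos he]; exact (hidem e he).2.choose_spec.1
  have hffix : ∀ e ∈ s, σR^[f e] e = e := by
    intro e he; simp only [hf, dif_pos he]; exact (hidem e he).2.choose_spec.2
  -- the orbit finset
  set t : Finset R := s.biUnion (fun e => (Finset.range (f e)).image (fun i => σR^[i] e))
    with ht
  have hts : ∀ x ∈ t, ∃ e ∈ s, ∃ i : ℕ, σR^[i] e = x := by
    intro x hx
    simp only [ht, Finset.mem_biUnion, Finset.mem_image, Finset.mem_range] at hx
    obtain ⟨e, he, i, _, hi⟩ := hx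
    exact ⟨e, he, i, hi⟩
  have hTt : ∀ e ∈ s, ∀ i : ℕ, σR^[i] e ∈ t := by
    intro e he i
    have : σR^[i] e = σR^[i % f e] e := iter_mod_fix σR e (f e) (hffix e he) i
    rw [this]
    simp only [ht, Finset.mem_biUnion]
    exact ⟨e, he, Finset.mem_image.2 ⟨i % f e, Finset.mem_range.2
      (Nat.mod_lt _ (hf0 e he)), rfl⟩⟩
  have hidt : ∀ x ∈ t, IsIdempotentElem x := by
    intro x hx
    obtain ⟨e, he, i, rfl⟩ := hts x hx
    have h1 := (hidem e he).1
    unfold IsIdempotentElem at *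
    rw [← iterate_map_mul, h1]
  -- the big period M
  set M : ℕ := ∏ e ∈ s, f e with hM
  have hM0 : 0 < M := Finset.prod_pos hf0
  have hfixM : ∀ x ∈ t, σR^[M] x = x := by
    intro x hx
    obtain ⟨e, he, i, rfl⟩ := hts x hx
    obtain ⟨c, hc⟩ := Finset.dvd_prod_of_mem f he
    have he2 : σR^[M] e = e := by rw [hM, hc]; exact iter_mul_fix σR e (f e) (hffix e he) c
    rw [← Function.iterate_add_apply, Nat.add_comm, Function.iterate_add_apply, he2]
  have hσt : ∀ x ∈ t, σR x ∈ t := by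
    intro x hx
    obtain ⟨e, he, i, rfl⟩ := hts x hx
    rw [← Function.iterate_succ_apply' σR i e]
    exact hTt e he (i + 1)
  have hinj : Set.InjOn σR ↑t := by
    intro x hx y hy hxy
    have hx' := hfixM x hx
    have hy' := hfixM y hy
    obtain ⟨M', hM'⟩ : ∃ M', M = M' + 1 := ⟨M - 1, (Nat.succ_pred_eq_of_pos hM0).symm⟩
    rw [hM', Function.iterate_succ_apply] at hx' hy'
    rw [← hx', ← hy', hxy]
  have himage : t.image σR = t := by
    apply Finset.eq_of_subset_of_card_le
    · intro y hy
      obtain ⟨x, hx, rfl⟩ := Finset.mem_image.1 hy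
      exact hσt x hx
    · rw [Finset.card_image_of_injOn hinj]
  -- atoms
  set a : Finset R → R := fun F => (∏ x ∈ F, x) * ∏ x ∈ t \ F, (1 - x) with ha
  have hsum : ∑ F ∈ t.powerset, a F = 1 := by
    rw [← Finset.prod_add (fun x => x) (fun x => 1 - x) t]
    simp
  have hzero : ∀ F G : Finset R, G ⊆ t → (∃ x ∈ F, x ∈ t ∧ x ∉ G) → a F * a G = 0 := by
    rintro F G hG ⟨x, hxF, hxt, hxG⟩
    have hxtG : x ∈ t \ G := Finset.mem_sdiff.2 ⟨hxt, hxG⟩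
    simp only [ha]
    rw [← Finset.mul_prod_erase F _ hxF, ← Finset.mul_prod_erase (t \ G) _ hxtG]
    have hx0 : x * (1 - x) = 0 := by
      have := hidt x hxt
      unfold IsIdempotentElem at this
      rw [mul_one_sub, this, sub_self]
    calc (x * ∏ y ∈ F.erase x, y) * (∏ y ∈ t \ F, (1 - y)) *
          ((∏ y ∈ G, y) * ((1 - x) * ∏ y ∈ (t \ G).erase x, (1 - y)))
        = (x * (1 - x)) * ((∏ y ∈ F.erase x, y) * (∏ y ∈ t \ F, (1 - y)) *
          ((∏ y ∈ G, y) * ∏ y ∈ (t \ G).erase x, (1 - y))) := by ring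
      _ = 0 := by rw [hx0, zero_mul]
  have hFmul : ∀ F ∈ t.powerset, ∀ G ∈ t.powerset, F ≠ G → a F * a G = 0 := by
    intro F hF G hG hne
    rw [Finset.mem_powerset] at hF hG
    by_cases hFG : F ⊆ G
    · have : ¬ G ⊆ F := fun h => hne (Finset.Subset.antisymm hFG h)
      obtain ⟨x, hxG, hxF⟩ := Finset.not_subset.1 this
      rw [mul_comm]
      exact hzero G F hF ⟨x, hxG, hG hxG, hxF⟩
    · obtain ⟨x, hxF, hxG⟩ := Finset.not_subset.1 hFG
      exact hzero F G hG ⟨x, hxF, hF hxF, hxG⟩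
  have hFidem : ∀ F ∈ t.powerset, a F * a F = a F := by
    intro F hF
    rw [Finset.mem_powerset] at hF
    simp only [ha]
    have h1 : (∏ x ∈ F, x) * (∏ x ∈ F, x) = ∏ x ∈ F, x := by
      rw [← Finset.prod_mul_distrib]
      exact Finset.prod_congr rfl fun x hx => hidt x (hF hx)
    have h2 : (∏ x ∈ t \ F, (1 - x)) * (∏ x ∈ t \ F, (1 - x)) = ∏ x ∈ t \ F, (1 - x) := by
      rw [← Finset.prod_mul_distrib]
      refine Finset.prod_congr rfl fun x hx => ?_
      exact (hidt x (Finset.mem_sdiff.1 hx).1).one_sub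
    calc (∏ x ∈ F, x) * (∏ x ∈ t \ F, (1 - x)) * ((∏ x ∈ F, x) * ∏ x ∈ t \ F, (1 - x))
        = ((∏ x ∈ F, x) * (∏ x ∈ F, x)) * ((∏ x ∈ t \ F, (1 - x)) * ∏ x ∈ t \ F, (1 - x)) := by
          ring
      _ = _ := by rw [h1, h2]
  have hmulmem : ∀ F ∈ t.powerset, ∀ x ∈ F, x * a F = a F := by
    intro F hF x hx
    rw [Finset.mem_powerset] at hF
    have hxi := hidt x (hF hx)
    unfold IsIdempotentElem at hxi
    simp only [ha]
    conv_lhs => rw [← Finset.mul_prod_erase F _ hx]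
    conv_rhs => rw [← Finset.mul_prod_erase F _ hx]
    calc x * (x * (∏ y ∈ F.erase x, y) * ∏ y ∈ t \ F, (1 - y))
        = (x * x) * ((∏ y ∈ F.erase x, y) * ∏ y ∈ t \ F, (1 - y)) := by ring
      _ = _ := by rw [hxi]; ring
  have hmulnot : ∀ F ∈ t.powerset, ∀ x ∈ t, x ∉ F → x * a F = 0 := by
    intro F hF x hxt hxF
    have hx0 : x * (1 - x) = 0 := by
      have := hidt x hxt
      unfold IsIdempotentElem at this
      rw [mul_one_sub, this, sub_self]
    have hxtF : x ∈ t \ F := Finset.mem_sdiff.2 ⟨hxt, hxF⟩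
    simp only [ha]
    rw [← Finset.mul_prod_erase (t \ F) _ hxtF]
    calc x * ((∏ y ∈ F, y) * ((1 - x) * ∏ y ∈ (t \ F).erase x, (1 - y)))
        = (x * (1 - x)) * ((∏ y ∈ F, y) * ∏ y ∈ (t \ F).erase x, (1 - y)) := by ring
      _ = 0 := by rw [hx0, zero_mul]
  -- span of atoms is everything
  set V : Submodule k R := Submodule.span k ↑(t.powerset.image a) with hV
  have hatom_mem : ∀ F ∈ t.powerset, a F ∈ V :=
    fun F hF => Submodule.subset_span (Finset.mem_coe.2 (Finset.mem_image_of_mem a hF))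
  have hone_mem : (1 : R) ∈ V := by
    rw [← hsum]; exact Submodule.sum_mem _ fun F hF => hatom_mem F hF
  have hVmul : ∀ x ∈ V, ∀ y ∈ V, x * y ∈ V := by
    have hle : V * V ≤ V := by
      rw [hV, Submodule.span_mul_span]
      refine Submodule.span_le.2 ?_
      rintro _ ⟨u, hu, v, hv, rfl⟩
      obtain ⟨F, hF, rfl⟩ := Finset.mem_image.1 (Finset.mem_coe.1 hu)
      obtain ⟨G, hG, rfl⟩ := Finset.mem_image.1 (Finset.mem_coe.1 hv)
      show a F * a G ∈ V
      by_cases hFG : F = G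
      · subst hFG; rw [hFidem F hF]; exact hatom_mem F hF
      · rw [hFmul F hF G hG hFG]; exact zero_mem _
    exact fun x hx y hy => hle (Submodule.mul_mem_mul hx hy)
  have htmem : ∀ x ∈ t, x ∈ V := by
    intro x hx
    have hxd : x = ∑ F ∈ t.powerset, x * a F := by
      rw [← Finset.mul_sum, hsum, mul_one]
    rw [hxd]
    refine Submodule.sum_mem _ fun F hF => ?_
    by_cases hxF : x ∈ F
    · rw [hmulmem F hF x hxF]; exact hatom_mem F hF
    · rw [hmulnot F hF x hx hxF]; exact zero_mem _
  have hVtop : ∀ r : R, r ∈ V := by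
    intro r
    have hS : Algebra.adjoin k {x : R | ∃ e ∈ s, ∃ i : ℕ, σR^[i] e = x} ≤
        Submodule.toSubalgebra V hone_mem (fun x y hx hy => hVmul x hx y hy) := by
      refine Algebra.adjoin_le ?_
      rintro x ⟨e, he, i, rfl⟩
      exact htmem _ (hTt e he i)
    rw [hgen] at hS
    exact hS (by trivial)
  -- σ action on atoms
  have himgmem : ∀ F ∈ t.powerset, F.image σR ∈ t.powerset := by
    intro F hF
    rw [Finset.mem_powerset] at hF ⊢
    intro y hy
    obtain ⟨x, hx, rfl⟩ := Finset.mem_image.1 hy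
    exact hσt x (hF hx)
  have hσatom : ∀ F ∈ t.powerset, σR (a F) = a (F.image σR) := by
    intro F hF
    rw [Finset.mem_powerset] at hF
    have hsd : (t \ F).image σR = t \ F.image σR := by
      ext y
      simp only [Finset.mem_image, Finset.mem_sdiff]
      constructor
      · rintro ⟨x, ⟨hxt, hxF⟩, rfl⟩
        refine ⟨hσt x hxt, ?_⟩
        rintro ⟨x', hx', hxx'⟩
        exact hxF (hinj (hF hx') hxt hxx' ▸ hx')
      · rintro ⟨hyt, hyF⟩
        obtain ⟨x, hxt, rfl⟩ := Finset.mem_image.1 (himage ▸ hyt)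
        exact ⟨x, ⟨hxt, fun hxF => hyF ⟨x, hxF, rfl⟩⟩, rfl⟩
    simp only [ha, map_mul, map_prod]
    rw [Finset.prod_image (fun x hx y hy => hinj (hF hx) (hF hy)), ← hsd,
      Finset.prod_image (fun x hx y hy => hinj (Finset.mem_sdiff.1 hx).1 (Finset.mem_sdiff.1 hy).1)]
    simp only [map_sub, map_one]
  have hiter : ∀ j : ℕ, ∀ F ∈ t.powerset, σR^[j] (a F) = a (F.image (σR^[j])) := by
    intro j
    induction j with
    | zero => intro F hF; simp
    | succ n ih =>
      intro F hF
      rw [Function.iterate_succ_apply, hσatom F hF, ih _ (himgmem F hF),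
        Finset.image_image]
      rfl
  have hnz : ∀ F ∈ t.powerset, a F ≠ 0 → a (F.image σR) ≠ 0 := by
    intro F hF h0 hc
    apply h0
    obtain ⟨M', hM'⟩ : ∃ M', M = M' + 1 := ⟨M - 1, (Nat.succ_pred_eq_of_pos hM0).symm⟩
    have h1 : σR^[M] (a F) = a F := by
      rw [hiter M F hF,
        Finset.image_congr (g := id) (fun x hx => hfixM x ((Finset.mem_powerset.1 hF) hx)),
        Finset.image_id]
    calc a F = σR^[M] (a F) := h1.symm
      _ = σR^[M'] (σR (a F)) := by rw [hM', Function.iterate_succ_apply]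
      _ = 0 := by rw [hσatom F hF, hc, Function.iterate_fixed (map_zero σR)]
  -- nonzero atoms: a basis
  set N : Finset (Finset R) := t.powerset.filter (fun F => a F ≠ 0) with hN
  set bfun : {F // F ∈ N} → R := fun F => a F.1 with hbfun
  have hNp : ∀ F : {F // F ∈ N}, F.1 ∈ t.powerset := fun F => (Finset.mem_filter.1 F.2).1
  have hNnz : ∀ F : {F // F ∈ N}, a F.1 ≠ 0 := fun F => (Finset.mem_filter.1 F.2).2
  have hbmul : ∀ i j : {F // F ∈ N}, bfun i * bfun j = if i = j then bfun i else 0 := by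
    intro i j
    by_cases hij : i = j
    · subst hij; rw [if_pos rfl]; exact hFidem i.1 (hNp i)
    · rw [if_neg hij]
      exact hFmul i.1 (hNp i) j.1 (hNp j) (fun h => hij (Subtype.ext h))
  have hlin : LinearIndependent k bfun := by
    rw [linearIndependent_iff']
    intro u g hsum0 i hi
    have h2 : (∑ j ∈ u, g j • bfun j) * bfun i = 0 := by rw [hsum0, zero_mul]
    rw [Finset.sum_mul] at h2
    have h3 : ∀ j ∈ u, g j • bfun j * bfun i = if j = i then g i • bfun i else 0 := by
      intro j hj
      rw [smul_mul_assoc, hbmul j i]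
      split
      · subst ‹j = i›; rfl
      · rw [smul_zero]
    rw [Finset.sum_congr rfl h3, Finset.sum_ite_eq' u i (fun _ => g i • bfun i),
      if_pos hi] at h2
    rcases smul_eq_zero.1 h2 with h | h
    · exact h
    · exact absurd h (hNnz i)
  have hspan : ⊤ ≤ Submodule.span k (Set.range bfun) := by
    intro r _
    have hr := hVtop r
    rw [hV] at hr
    refine Submodule.span_le.2 ?_ hr
    intro y hy
    obtain ⟨F, hF, rfl⟩ := Finset.mem_image.1 (Finset.mem_coe.1 hy)
    by_cases h0 : a F = 0
    · rw [h0]; exact zero_mem _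
    · exact Submodule.subset_span ⟨⟨F, Finset.mem_filter.2 ⟨hF, h0⟩⟩, rfl⟩
  set bR : Module.Basis {F // F ∈ N} k R := Module.Basis.mk hlin hspan with hbR
  have hbRapp : ∀ i, bR i = bfun i := fun i => Module.Basis.mk_apply hlin hspan i
  have hbone : ∑ i, bfun i = 1 := by
    rw [← hsum]
    rw [← Finset.sum_filter_of_ne (p := fun F => a F ≠ 0) (fun F _ h => h)]
    exact Finset.sum_coe_sort N a
  -- the permutation
  set π : {F // F ∈ N} → {F // F ∈ N} := fun F =>
    ⟨F.1.image σR, Finset.mem_filter.2 ⟨himgmem F.1 (hNp F), hnz F.1 (hNp F) (hNnz F)⟩⟩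
    with hπ
  have hπb : ∀ i, σR (bfun i) = bfun (π i) := fun i => hσatom i.1 (hNp i)
  have hπinj : Function.Injective π := by
    intro i j hij
    apply Subtype.ext
    have h1 : i.1.image σR = j.1.image σR := congrArg Subtype.val hij
    have hi := Finset.mem_powerset.1 (hNp i)
    have hj := Finset.mem_powerset.1 (hNp j)
    ext x
    constructor
    · intro hx
      have : σR x ∈ j.1.image σR := h1 ▸ Finset.mem_image_of_mem σR hx
      obtain ⟨y, hy, hxy⟩ := Finset.mem_image.1 this
      exact hinj (hj hy) (hi hx) hxy ▸ hy
    · intro hx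
      have : σR x ∈ i.1.image σR := h1.symm ▸ Finset.mem_image_of_mem σR hx
      obtain ⟨y, hy, hxy⟩ := Finset.mem_image.1 this
      exact hinj (hi hy) (hj hx) hxy ▸ hy
  -- basis facts in terms of bR
  have hbRmul : ∀ i j, bR i * bR j = if i = j then bR i else 0 := by
    intro i j; rw [hbRapp, hbRapp, hbmul]
  have hbRone : ∑ i, bR i = 1 := by
    rw [Finset.sum_congr rfl (fun i _ => hbRapp i)]; exact hbone
  constructor
  · -- étale
    set m := Fintype.card {F // F ∈ N} with hm
    set eF := Fintype.equivFin {F // F ∈ N} with heF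
    set bF : Module.Basis (Fin m) k R := bR.reindex eF with hbF
    have hbFapp : ∀ i, bF i = bR (eF.symm i) := fun i => bR.reindex_apply eF i
    have hbFmul : ∀ i j, bF i * bF j = if i = j then bF i else 0 := by
      intro i j
      rw [hbFapp, hbFapp, hbRmul]
      by_cases hij : i = j
      · subst hij; rw [if_pos rfl, if_pos rfl]
      · rw [if_neg hij, if_neg (fun h => hij (by rw [← eF.apply_symm_apply i, h,
          eF.apply_symm_apply]))]
    have hbFone : ∑ i, bF i = 1 := by
      rw [Finset.sum_congr rfl (fun i _ => hbFapp i), Equiv.sum_comp eF.symm ⇑bR]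
      exact hbRone
    exact ⟨m, ⟨piEquivOfIdemBasis bF hbFmul hbFone⟩⟩
  · -- σ-separable
    intro K _ _ σK τ hτ
    rw [injective_iff_map_eq_zero]
    intro z hz
    set B := bR.baseChange K with hB
    have hBapp : ∀ i, B i = 1 ⊗ₜ[k] bR i := fun i => bR.baseChange_apply K i
    set c := B.repr z with hc
    have hz1 : z = ∑ i, c i • B i := (B.sum_repr z).symm
    have hsm : ∀ (x : K) (i), x • B i = x ⊗ₜ[k] bR i := by
      intro x i
      rw [hBapp, TensorProduct.smul_tmul', smul_eq_mul, mul_one]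
    have hτz : τ z = ∑ i, σK (c i) • B (π i) := by
      rw [hz1, map_sum]
      refine Finset.sum_congr rfl fun i _ => ?_
      rw [hsm, hτ, hbRapp, hπb, ← hbRapp, ← hsm]
    rw [hτz] at hz
    have hli : LinearIndependent K (⇑B ∘ π) := B.linearIndependent.comp π hπinj
    have hall : ∀ i, σK (c i) = 0 := by
      have := Fintype.linearIndependent_iff.1 hli (fun i => σK (c i)) (by
        simpa using hz)
      exact this
    have hc0 : ∀ i, c i = 0 := fun i => RingHom.injective σK (by rw [hall i, map_zero])
    rw [hz1]
    simp [hc0]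

end Main


/-- A `k`-σ-algebra σ-generated by finitely many periodic idempotent elements
is strongly σ-étale. -/
theorem strongly_etale_stmt8
    (k R : Type) [Field k] [CommRing R] [Algebra k R]
    (σk : k →+* k) (σR : R →+* R)
    (hcomp : ∀ x : k, σR (algebraMap k R x) = algebraMap k R (σk x))
    (s : Finset R)
    (hidem : ∀ e ∈ s, IsIdempotentElem e ∧ ∃ n : ℕ, 0 < n ∧ σR^[n] e = e)
    (hgen : Algebra.adjoin k {x : R | ∃ e ∈ s, ∃ i : ℕ, σR^[i] e = x} = ⊤) :
    IsEtaleAlgebra k R ∧ IsSigmaSeparable k R σk σR := by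
  obtain ⟨h1, h2⟩ := strongly_etale_aux σR s hidem hgen
  exact ⟨h1, fun K _ _ σK _ τ hτ => h2 K σK τ hτ⟩
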